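/- Assume Conjecture 1: there exists N such that for every n ≥ N and every positive integer m, if m+1, ..., m+n are all composite then ∏_{i=1}^n (m+i) = n! · ∏_{i=1}^n a_i for some positive integers a_1, ..., a_n with a_i dividing m+i, a_i > 1 for each i, and gcd(a_i, a_j) = 1 for all i ≠ j. Then there exists N' such that for every n ≥ N' the following holds: if d > 1 is a divisor of ∏_{n/2 < p < n, p prime} p, and d = nt + r with t ≥ 1 and 1 ≤ r ≤ n, and gcd(d, nt + j) = 1 for every 1 ≤ j ≤ n with j ≠ r, then there is a prime in the interval [nt + 1, nt + n]. -/

import Mathlib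

/-- **Conjecture 1.** For all sufficiently large `n`, the product of any `n`
consecutive composite numbers `m+1, ..., m+n` can be written as
`n! · a_1 ⋯ a_n` with `a_i ∣ m+i`, `a_i > 1`, and the `a_i` pairwise coprime. -/
def Conjecture1 : Prop :=
  ∃ N : ℕ, ∀ n : ℕ, N ≤ n → ∀ m : ℕ, 0 < m →
    (∀ i ∈ Finset.Icc 1 n, 1 < m + i ∧ ¬ (m + i).Prime) →
    ∃ a : ℕ → ℕ,
      (∏ i ∈ Finset.Icc 1 n, (m + i)) =
        Nat.factorial n * ∏ i ∈ Finset.Icc 1 n, a i ∧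
      (∀ i ∈ Finset.Icc 1 n, a i ∣ (m + i) ∧ 1 < a i) ∧
      (∀ i ∈ Finset.Icc 1 n, ∀ j ∈ Finset.Icc 1 n, i ≠ j →
        Nat.Coprime (a i) (a j))

lemma squarefree_prod_of_primes (s : Finset ℕ) (hs : ∀ p ∈ s, p.Prime) :
    Squarefree (∏ p ∈ s, p) := by
  induction s using Finset.induction with
  | empty => simp only [Finset.prod_empty]; exact squarefree_one
  | @insert a s ha ih =>
    rw [Finset.prod_insert ha]
    have hap : a.Prime := hs a (Finset.mem_insert_self a s)
    have hcop : Nat.Coprime a (∏ p ∈ s, p) := by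
      apply Nat.Coprime.prod_right
      intro i hi
      exact (Nat.coprime_primes hap (hs i (Finset.mem_insert_of_mem hi))).mpr
        (fun h => ha (h ▸ hi))
    exact (Nat.squarefree_mul hcop).mpr
      ⟨hap.squarefree, ih (fun p hp => hs p (Finset.mem_insert_of_mem hp))⟩

/-- Assuming Conjecture 1, for all sufficiently large `n`: if `d > 1` divides
`∏_{n/2 < p < n} p`, `d = nt + r` with `t ≥ 1` and `1 ≤ r ≤ n`, and `d` is
coprime to `nt + j` for every `1 ≤ j ≤ n` with `j ≠ r`, then there is a prime
in the interval `[nt + 1, nt + n]`. -/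
theorem exists_prime_in_block_of_conjecture1 (hC : Conjecture1) :
    ∃ N' : ℕ, ∀ n : ℕ, N' ≤ n → ∀ d : ℕ, 1 < d →
      d ∣ (∏ p ∈ Finset.filter (fun p => p.Prime ∧ n < 2 * p) (Finset.range n), p) →
      ∀ t r : ℕ, 1 ≤ t → 1 ≤ r → r ≤ n → d = n * t + r →
      (∀ j ∈ Finset.Icc 1 n, j ≠ r → Nat.Coprime d (n * t + j)) →
      ∃ p : ℕ, p.Prime ∧ n * t + 1 ≤ p ∧ p ≤ n * t + n := by
  obtain ⟨N, hN⟩ := hC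
  refine ⟨max N 1, fun n hn d hd1 hdvd t r ht hr1 hrn hdr hcop => ?_⟩
  have hNn : N ≤ n := le_trans (le_max_left _ _) hn
  have hn1 : 1 ≤ n := le_trans (le_max_right _ _) hn
  by_contra hnp
  push_neg at hnp
  set m := n * t with hm
  have hm0 : 0 < m := by positivity
  -- all m+i, i ∈ [1,n], are composite
  have hcomp : ∀ i ∈ Finset.Icc 1 n, 1 < m + i ∧ ¬ (m + i).Prime := by
    intro i hi
    rw [Finset.mem_Icc] at hi
    constructor
    · omega
    · intro hp
      exact absurd (by omega : m + i ≤ m + n) (not_le.mpr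
        (by have := hnp (m + i) hp (by omega); omega))
  obtain ⟨a, hprod, hdiv, hpair⟩ := hN n hNn m hm0 hcomp
  have hrIcc : r ∈ Finset.Icc 1 n := Finset.mem_Icc.mpr ⟨hr1, hrn⟩
  have hmr : m + r = d := by omega
  -- a r has a prime factor q
  have har := hdiv r hrIcc
  have haq : (a r).minFac.Prime := Nat.minFac_prime (by omega)
  set q := (a r).minFac with hq
  have hqar : q ∣ a r := Nat.minFac_dvd _
  have hqd : q ∣ d := hmr ▸ (hqar.trans har.1)
  -- q belongs to the finset of primes
  set S := Finset.filter (fun p => p.Prime ∧ n < 2 * p) (Finset.range n) with hS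
  have hSprime : ∀ p ∈ S, p.Prime := by
    intro p hp
    rw [hS, Finset.mem_filter] at hp
    exact hp.2.1
  obtain ⟨p, hpS, hqp⟩ := (haq.prime.dvd_finset_prod_iff id).mp (hqd.trans hdvd)
  have hqeq : q = p := (((hSprime p hpS).dvd_iff_eq haq.ne_one).mp hqp).symm
  have hqlt : q < n := by
    rw [hqeq]; rw [hS, Finset.mem_filter, Finset.mem_range] at hpS; exact hpS.1
  -- q divides n!
  have hqfac : q ∣ Nat.factorial n := Nat.dvd_factorial haq.pos (le_of_lt hqlt)
  -- q*q divides the product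
  have hq2 : q * q ∣ ∏ i ∈ Finset.Icc 1 n, (m + i) := by
    rw [hprod]
    exact mul_dvd_mul hqfac (hqar.trans (Finset.dvd_prod_of_mem a hrIcc))
  -- q coprime to the other factors
  have hrest : Nat.Coprime q (∏ i ∈ (Finset.Icc 1 n).erase r, (m + i)) := by
    apply Nat.Coprime.prod_right
    intro j hj
    have hjne : j ≠ r := Finset.ne_of_mem_erase hj
    have hjIcc : j ∈ Finset.Icc 1 n := Finset.mem_of_mem_erase hj
    exact Nat.Coprime.coprime_dvd_left hqd (hcop j hjIcc hjne)
  -- hence q*q divides m + r = d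
  have hq2d : q * q ∣ d := by
    rw [← hmr]
    have := Finset.mul_prod_erase (Finset.Icc 1 n) (fun i => m + i) hrIcc
    rw [← this] at hq2
    exact (Nat.Coprime.mul hrest hrest).dvd_of_dvd_mul_right hq2
  -- but d is squarefree
  have hsf : Squarefree d :=
    (squarefree_prod_of_primes S hSprime).squarefree_of_dvd hdvd
  exact haq.not_isUnit (hsf q hq2d)
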